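/- Let π be a PDLsf[Loop] path formula, let Minπ and Maxπ be path formulas whose semantics in every MSC are {(e,f) : ⟦π⟧(e)≠∅ and f=min_π(e)} and {(e,f) : ⟦π⟧(e)≠∅ and f=max_π(e)} respectively, let π⁻¹ be a path formula with ⟦π⁻¹⟧ the converse of ⟦π⟧, and let ←⁺ denote the path formula ←_true. Then the event formulas Loop(π) and Loop(Maxπ) ∨ (⟨π⁻¹⟩true ∧ Loop(Maxπ·←⁺) ∧ ¬Loop(Minπ·←⁺)) are equivalent: they have the same truth value at every event of every MSC over P and Σ. -/

import Mathlib

set_option maxHeartbeats 1000000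

/-! ## Message sequence charts -/

/-- A message sequence chart (MSC) over processes `P` and labels `Lab`.
Events are natural numbers; `E` is the finite nonempty set of events. -/
structure MSC (P : Type) (Lab : Type) where
  /-- the finite set of events -/
  E : Finset ℕ
  nonemptyE : E.Nonempty
  /-- process edges `→` (direct successor on a process) -/
  proc : ℕ → ℕ → Prop
  /-- message edges `◁` -/
  msg : ℕ → ℕ → Prop
  /-- location (process) of each event -/
  loc : ℕ → P
  /-- label of each event -/
  lab : ℕ → Lab
  proc_mem : ∀ e f, proc e f → e ∈ E ∧ f ∈ E
  msg_mem : ∀ e f, msg e f → e ∈ E ∧ f ∈ E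
  proc_loc : ∀ e f, proc e f → loc e = loc f
  msg_loc : ∀ e f, msg e f → loc e ≠ loc f
  /-- on each process, any two events are comparable w.r.t. `→⁺` -/
  proc_total : ∀ e f, e ∈ E → f ∈ E → loc e = loc f →
    e = f ∨ Relation.TransGen proc e f ∨ Relation.TransGen proc f e
  /-- `→` is the direct-successor (covering) relation of the order `→⁺` -/
  proc_cover : ∀ e f, proc e f →
    ¬ ∃ g, Relation.TransGen proc e g ∧ Relation.TransGen proc g f
  /-- every event belongs to at most one message edge -/
  msg_once : ∀ e f e' f', msg e f → msg e' f' →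
    (e = e' ∨ e = f' ∨ f = e' ∨ f = f') → e = e' ∧ f = f'
  /-- FIFO condition -/
  fifo : ∀ e f e' f', msg e f → msg e' f' → loc e = loc e' → loc f = loc f' →
    (Relation.ReflTransGen proc e e' ↔ Relation.ReflTransGen proc f f')
  /-- `→ ∪ ◁` is acyclic -/
  acyclic : ∀ e, ¬ Relation.TransGen (fun a b => proc a b ∨ msg a b) e e

namespace MSC

variable {P Lab : Type}

/-- `≤proc`, the reflexive transitive closure of `→`. -/
def procLe (M : MSC P Lab) : ℕ → ℕ → Prop := Relation.ReflTransGen M.proc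

/-- `<proc`, the transitive closure of `→`. -/
def procLt (M : MSC P Lab) : ℕ → ℕ → Prop := Relation.TransGen M.proc

/-- the happened-before relation `≤ = (→ ∪ ◁)*`. -/
def hb (M : MSC P Lab) : ℕ → ℕ → Prop :=
  Relation.ReflTransGen (fun a b => M.proc a b ∨ M.msg a b)

/-- Relabelling an MSC (same events and edges, new labelling). -/
def relabel {Γ : Type} (M : MSC P Lab) (γ : ℕ → Γ) : MSC P Γ where
  E := M.E
  nonemptyE := M.nonemptyE
  proc := M.proc
  msg := M.msg
  loc := M.loc
  lab := γ
  proc_mem := M.proc_mem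
  msg_mem := M.msg_mem
  proc_loc := M.proc_loc
  msg_loc := M.msg_loc
  proc_total := M.proc_total
  proc_cover := M.proc_cover
  msg_once := M.msg_once
  fifo := M.fifo
  acyclic := M.acyclic

end MSC

/-! ## Star-free PDL -/

mutual
/-- Event formulas of star-free PDL. -/
inductive EF (P Lab : Type) : Type where
  | proc : P → EF P Lab
  | lab : Lab → EF P Lab
  | or : EF P Lab → EF P Lab → EF P Lab
  | not : EF P Lab → EF P Lab
  | dia : PF P Lab → EF P Lab → EF P Lab
  | loop : PF P Lab → EF P Lab
/-- Path formulas of star-free PDL. -/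
inductive PF (P Lab : Type) : Type where
  | next : PF P Lab
  | prev : PF P Lab
  | msg : P → P → PF P Lab
  | msgInv : P → P → PF P Lab
  | nextG : EF P Lab → PF P Lab
  | prevG : EF P Lab → PF P Lab
  | jump : P → P → PF P Lab
  | test : EF P Lab → PF P Lab
  | comp : PF P Lab → PF P Lab → PF P Lab
  | union : PF P Lab → PF P Lab → PF P Lab
  | inter : PF P Lab → PF P Lab → PF P Lab
  | compl : PF P Lab → PF P Lab
end

mutual
/-- Satisfaction of event formulas at an event. -/
def EF.sat {P Lab : Type} (M : MSC P Lab) : EF P Lab → ℕ → Prop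
  | .proc p, e => e ∈ M.E ∧ M.loc e = p
  | .lab a, e => e ∈ M.E ∧ M.lab e = a
  | .or φ ψ, e => EF.sat M φ e ∨ EF.sat M ψ e
  | .not φ, e => e ∈ M.E ∧ ¬ EF.sat M φ e
  | .dia π φ, e => ∃ f, PF.sem M π e f ∧ EF.sat M φ f
  | .loop π, e => PF.sem M π e e
/-- Semantics of path formulas as binary relations on events. -/
def PF.sem {P Lab : Type} (M : MSC P Lab) : PF P Lab → ℕ → ℕ → Prop
  | .next, e, f => M.proc e f
  | .prev, e, f => M.proc f e
  | .msg p q, e, f => M.msg e f ∧ M.loc e = p ∧ M.loc f = q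
  | .msgInv p q, e, f => M.msg f e ∧ M.loc f = p ∧ M.loc e = q
  | .nextG φ, e, f => M.procLt e f ∧ ∀ g, M.procLt e g → M.procLt g f → EF.sat M φ g
  | .prevG φ, e, f => M.procLt f e ∧ ∀ g, M.procLt f g → M.procLt g e → EF.sat M φ g
  | .jump p r, e, f => e ∈ M.E ∧ f ∈ M.E ∧ M.loc e = p ∧ M.loc f = r
  | .test φ, e, f => e = f ∧ EF.sat M φ e
  | .comp π₁ π₂, e, f => ∃ g, PF.sem M π₁ e g ∧ PF.sem M π₂ g f
  | .union π₁ π₂, e, f => PF.sem M π₁ e f ∨ PF.sem M π₂ e f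
  | .inter π₁ π₂, e, f => PF.sem M π₁ e f ∧ PF.sem M π₂ e f
  | .compl π, e, f => e ∈ M.E ∧ f ∈ M.E ∧ ¬ PF.sem M π e f
end

/-- Sentences of star-free PDL. -/
inductive PDLS (P Lab : Type) : Type where
  | ex : EF P Lab → PDLS P Lab
  | or : PDLS P Lab → PDLS P Lab → PDLS P Lab
  | not : PDLS P Lab → PDLS P Lab

/-- Satisfaction of PDL sentences. -/
def PDLS.sat {P Lab : Type} (M : MSC P Lab) : PDLS P Lab → Prop
  | .ex φ => ∃ e ∈ M.E, EF.sat M φ e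
  | .or ξ ζ => PDLS.sat M ξ ∨ PDLS.sat M ζ
  | .not ξ => ¬ PDLS.sat M ξ

/-- The four optional operators of star-free PDL. -/
inductive PDLOp : Type where
  | loop | union | inter | compl
deriving DecidableEq

mutual
/-- `EF.inFrag R φ` : the event formula `φ` belongs to the fragment `PDLsf[R]`. -/
def EF.inFrag {P Lab : Type} (R : Set PDLOp) : EF P Lab → Prop
  | .proc _ => True
  | .lab _ => True
  | .or φ ψ => EF.inFrag R φ ∧ EF.inFrag R ψ
  | .not φ => EF.inFrag R φ
  | .dia π φ => PF.inFrag R π ∧ EF.inFrag R φ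
  | .loop π => PDLOp.loop ∈ R ∧ PF.inFrag R π
/-- `PF.inFrag R π` : the path formula `π` belongs to the fragment `PDLsf[R]`. -/
def PF.inFrag {P Lab : Type} (R : Set PDLOp) : PF P Lab → Prop
  | .next => True
  | .prev => True
  | .msg _ _ => True
  | .msgInv _ _ => True
  | .nextG φ => EF.inFrag R φ
  | .prevG φ => EF.inFrag R φ
  | .jump _ _ => True
  | .test φ => EF.inFrag R φ
  | .comp π₁ π₂ => PF.inFrag R π₁ ∧ PF.inFrag R π₂
  | .union π₁ π₂ => PDLOp.union ∈ R ∧ PF.inFrag R π₁ ∧ PF.inFrag R π₂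
  | .inter π₁ π₂ => PDLOp.inter ∈ R ∧ PF.inFrag R π₁ ∧ PF.inFrag R π₂
  | .compl π => PDLOp.compl ∈ R ∧ PF.inFrag R π
end

/-- `PDLS.inFrag R ξ` : the sentence `ξ` belongs to the fragment `PDLsf[R]`. -/
def PDLS.inFrag {P Lab : Type} (R : Set PDLOp) : PDLS P Lab → Prop
  | .ex φ => EF.inFrag R φ
  | .or ξ ζ => PDLS.inFrag R ξ ∧ PDLS.inFrag R ζ
  | .not ξ => PDLS.inFrag R ξ

/-- Conjunction of event formulas (derived operator). -/
def EF.and {P Lab : Type} (φ ψ : EF P Lab) : EF P Lab :=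
  .not (.or (.not φ) (.not ψ))

/-- `isMinOf M π e m` : `m` is the `≤proc`-least element of `⟦π⟧_M(e)`
(in particular `⟦π⟧_M(e)` is nonempty). -/
def isMinOf {P Lab : Type} (M : MSC P Lab) (π : PF P Lab) (e m : ℕ) : Prop :=
  PF.sem M π e m ∧ ∀ f, PF.sem M π e f → M.procLe m f

/-- `isMaxOf M π e m` : `m` is the `≤proc`-greatest element of `⟦π⟧_M(e)`
(in particular `⟦π⟧_M(e)` is nonempty). -/
def isMaxOf {P Lab : Type} (M : MSC P Lab) (π : PF P Lab) (e m : ℕ) : Prop :=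
  PF.sem M π e m ∧ ∀ f, PF.sem M π e f → M.procLe f m

/-! ## MSO/FO logic over MSCs -/

/-- Formulas of MSO over MSCs: first-order kernel with atoms `p(x)`, `a(x)`,
`x = y`, `x → y`, `x ◁ y`, `x ≤ y` and additionally `x ∈ X_k` (monadic
second-order variables, used for the EMSO prefix). -/
inductive FOS (P Lab : Type) : Type where
  | pred : P → ℕ → FOS P Lab
  | lab : Lab → ℕ → FOS P Lab
  | eq : ℕ → ℕ → FOS P Lab
  | edge : ℕ → ℕ → FOS P Lab
  | medge : ℕ → ℕ → FOS P Lab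
  | le : ℕ → ℕ → FOS P Lab
  | inSet : ℕ → ℕ → FOS P Lab
  | or : FOS P Lab → FOS P Lab → FOS P Lab
  | not : FOS P Lab → FOS P Lab
  | ex : ℕ → FOS P Lab → FOS P Lab

/-- Satisfaction, with a first-order valuation `ν` and a second-order valuation `σ`.
First-order quantification ranges over the events of the MSC. -/
def FOS.sat {P Lab : Type} (M : MSC P Lab) : FOS P Lab → (ℕ → ℕ) → (ℕ → Set ℕ) → Prop
  | .pred p x, ν, _ => M.loc (ν x) = p
  | .lab a x, ν, _ => M.lab (ν x) = a
  | .eq x y, ν, _ => ν x = ν y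
  | .edge x y, ν, _ => M.proc (ν x) (ν y)
  | .medge x y, ν, _ => M.msg (ν x) (ν y)
  | .le x y, ν, _ => M.hb (ν x) (ν y)
  | .inSet x k, ν, σ => ν x ∈ σ k
  | .or Φ Ψ, ν, σ => FOS.sat M Φ ν σ ∨ FOS.sat M Ψ ν σ
  | .not Φ, ν, σ => ¬ FOS.sat M Φ ν σ
  | .ex x Φ, ν, σ => ∃ e ∈ M.E, FOS.sat M Φ (Function.update ν x e) σ

/-- Free first-order variables. -/
def FOS.free {P Lab : Type} : FOS P Lab → Finset ℕ
  | .pred _ x => {x}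
  | .lab _ x => {x}
  | .eq x y => {x, y}
  | .edge x y => {x, y}
  | .medge x y => {x, y}
  | .le x y => {x, y}
  | .inSet x _ => {x}
  | .or Φ Ψ => FOS.free Φ ∪ FOS.free Ψ
  | .not Φ => FOS.free Φ
  | .ex x Φ => (FOS.free Φ).erase x

/-- All first-order variables occurring (free or bound). -/
def FOS.vars {P Lab : Type} : FOS P Lab → Finset ℕ
  | .pred _ x => {x}
  | .lab _ x => {x}
  | .eq x y => {x, y}
  | .edge x y => {x, y}
  | .medge x y => {x, y}
  | .le x y => {x, y}
  | .inSet x _ => {x}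
  | .or Φ Ψ => FOS.vars Φ ∪ FOS.vars Ψ
  | .not Φ => FOS.vars Φ
  | .ex x Φ => insert x (FOS.vars Φ)

/-- A formula is first-order (`FO[→,◁,≤]`) iff it contains no set atoms. -/
def FOS.noSets {P Lab : Type} : FOS P Lab → Prop
  | .pred _ _ => True
  | .lab _ _ => True
  | .eq _ _ => True
  | .edge _ _ => True
  | .medge _ _ => True
  | .le _ _ => True
  | .inSet _ _ => False
  | .or Φ Ψ => FOS.noSets Φ ∧ FOS.noSets Ψ
  | .not Φ => FOS.noSets Φ
  | .ex _ Φ => FOS.noSets Φ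

/-! ## Communicating finite-state machines -/

/-- Actions of a process: internal `⟨a⟩`, send `!(a,m,q)`, receive `?(a,m,q)`. -/
inductive CAct (P Lab Msg : Type) : Type where
  | int : Lab → CAct P Lab Msg
  | snd : Lab → Msg → P → CAct P Lab Msg
  | rcv : Lab → Msg → P → CAct P Lab Msg

/-- The label performed by an action. -/
def CAct.label {P Lab Msg : Type} : CAct P Lab Msg → Lab
  | .int a => a
  | .snd a _ _ => a
  | .rcv a _ _ => a

/-- A communicating finite-state machine over `P` and `Lab`. -/
structure CFM (P Lab : Type) where
  /-- states -/
  S : Type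
  finS : Fintype S
  /-- messages -/
  Msg : Type
  finMsg : Fintype Msg
  /-- initial state of each process -/
  ι : P → S
  /-- transition relation of each process -/
  Δ : P → S → CAct P Lab Msg → S → Prop
  Δ_snd : ∀ p s a m q s', Δ p s (.snd a m q) s' → q ≠ p
  Δ_rcv : ∀ p s a m q s', Δ p s (.rcv a m q) s' → q ≠ p
  /-- acceptance condition -/
  Acc : (P → S) → Prop

/-- Existence of an accepting run of a CFM on an MSC. -/
def CFM.Accepts {P Lab : Type} (A : CFM P Lab) (M : MSC P Lab) : Prop :=
  ∃ (src tgt : ℕ → A.S) (act : ℕ → CAct P Lab A.Msg),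
    (∀ e ∈ M.E, A.Δ (M.loc e) (src e) (act e) (tgt e)) ∧
    (∀ e ∈ M.E, (act e).label = M.lab e) ∧
    (∀ e ∈ M.E, (¬ ∃ f, M.proc f e) → src e = A.ι (M.loc e)) ∧
    (∀ e f, M.proc e f → tgt e = src f) ∧
    (∀ e ∈ M.E, (¬ ∃ f, M.msg e f) → (¬ ∃ f, M.msg f e) → ∃ a, act e = .int a) ∧
    (∀ e f, M.msg e f →
      ∃ a a' m, act e = .snd a m (M.loc f) ∧ act f = .rcv a' m (M.loc e)) ∧
    (∃ fin : P → A.S,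
      (∀ p, (∀ e ∈ M.E, M.loc e ≠ p) → fin p = A.ι p) ∧
      (∀ e ∈ M.E, (¬ ∃ f, M.proc e f) → fin (M.loc e) = tgt e) ∧
      A.Acc fin)

/-- The language of a CFM. -/
def CFM.lang {P Lab : Type} (A : CFM P Lab) : Set (MSC P Lab) := {M | A.Accepts M}

/-! ## Letter-to-letter MSC transducers -/

/-- The relation accepted by a letter-to-letter MSC transducer from `Lab` to `Γ`,
i.e., a CFM over `P` and `Lab × Γ`. -/
def Ltrans {P Lab Γ : Type} (A : CFM P (Lab × Γ)) (M : MSC P Lab) (N : MSC P Γ) : Prop :=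
  ∃ γ : ℕ → Γ, N = M.relabel γ ∧ A.Accepts (M.relabel fun e => (M.lab e, γ e))

/-- `M_φ` : the MSC over `Bool` obtained from `M` by labelling each event with
the truth value of the event formula `φ`. -/
noncomputable def MSC.evalEF {P Lab : Type} (M : MSC P Lab) (φ : EF P Lab) : MSC P Bool :=
  M.relabel fun e => @ite Bool (EF.sat M φ e) (Classical.propDecidable _) true false

/-! ## Boolean combinations -/

/-- Boolean combinations over atoms of type `α`. -/
inductive BC (α : Type) : Type where
  | atom : α → BC α
  | or : BC α → BC α → BC α
  | not : BC α → BC α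

/-- Evaluation of a boolean combination given truth values of the atoms. -/
def BC.eval {α : Type} (v : α → Prop) : BC α → Prop
  | .atom a => v a
  | .or b c => BC.eval v b ∨ BC.eval v c
  | .not b => ¬ BC.eval v b

/-- The atoms occurring in a boolean combination. -/
def BC.atoms {α : Type} : BC α → Set α
  | .atom a => {a}
  | .or b c => BC.atoms b ∪ BC.atoms c
  | .not b => BC.atoms b

/-! ## Bounded MSCs -/

/-- `r` is a linearization of `M`: a total order on the events containing
the happened-before relation. -/
def IsLinearization {P Lab : Type} (M : MSC P Lab) (r : ℕ → ℕ → Prop) : Prop :=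
  (∀ e ∈ M.E, r e e) ∧
  (∀ e ∈ M.E, ∀ f ∈ M.E, r e f → r f e → e = f) ∧
  (∀ e ∈ M.E, ∀ f ∈ M.E, ∀ g ∈ M.E, r e f → r f g → r e g) ∧
  (∀ e ∈ M.E, ∀ f ∈ M.E, r e f ∨ r f e) ∧
  (∀ e ∈ M.E, ∀ f ∈ M.E, M.hb e f → r e f)

/-- `r` is a `B`-bounded linearization of `M`: at any point, each channel
contains at most `B` pending messages. -/
def IsBBoundedLin {P Lab : Type} (M : MSC P Lab) (r : ℕ → ℕ → Prop) (B : ℕ) : Prop :=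
  IsLinearization M r ∧
  ∀ g ∈ M.E, ∀ p q : P, p ≠ q →
    Set.ncard {ef : ℕ × ℕ | M.msg ef.1 ef.2 ∧ M.loc ef.1 = p ∧ M.loc ef.2 = q ∧
      r ef.1 g ∧ ¬ r ef.2 g} ≤ B

/-- `M` is `∃B`-bounded: some linearization of `M` is `B`-bounded. -/
def ExistsBBounded {P Lab : Type} (M : MSC P Lab) (B : ℕ) : Prop :=
  ∃ r : ℕ → ℕ → Prop, IsBBoundedLin M r B

/-- `g` is a send event on channel `(p,q)`. -/
def isSendOn {P Lab : Type} (M : MSC P Lab) (p q : P) (g : ℕ) : Prop :=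
  M.loc g = p ∧ ∃ h, M.msg g h ∧ M.loc h = q

/-- `revB M B f g` : `f` is a receive event with matching send `e` on some
channel `(p,q)`, and `g` is the `B`-th send on channel `(p,q)` strictly after `e`. -/
def revB {P Lab : Type} (M : MSC P Lab) (B : ℕ) (f g : ℕ) : Prop :=
  ∃ e, M.msg e f ∧ isSendOn M (M.loc e) (M.loc f) g ∧ M.procLt e g ∧
    Set.ncard {g' | isSendOn M (M.loc e) (M.loc f) g' ∧ M.procLt e g' ∧ M.procLe g' g} = B

/-- `≤_B = (≤ ∪ rev_B)*`. -/
def leB {P Lab : Type} (M : MSC P Lab) (B : ℕ) : ℕ → ℕ → Prop :=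
  Relation.ReflTransGen (fun a b => (M.proc a b ∨ M.msg a b) ∨ revB M B a b)

/-- `<_B`, the strict part of `≤_B`. -/
def ltB {P Lab : Type} (M : MSC P Lab) (B : ℕ) (e f : ℕ) : Prop :=
  leB M B e f ∧ ¬ leB M B f e

/-- `e ∥_B f` : incomparable w.r.t. `≤_B`. -/
def parB {P Lab : Type} (M : MSC P Lab) (B : ℕ) (e f : ℕ) : Prop :=
  ¬ leB M B e f ∧ ¬ leB M B f e

/-- `↑_B e = {g : e ≤_B g}`. -/
def upB {P Lab : Type} (M : MSC P Lab) (B : ℕ) (e : ℕ) : Set ℕ :=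
  {g | leB M B e g}

/-- The order `≺_B` (w.r.t. a fixed total order on `P`): `e ≺_B f` iff `e <_B f`, or
`e ∥_B f` and the `⊑`-minimum of `loc(↑_B e \ ↑_B f)` is strictly below the
`⊑`-minimum of `loc(↑_B f \ ↑_B e)`. -/
def precB {P Lab : Type} [LinearOrder P] (M : MSC P Lab) (B : ℕ) (e f : ℕ) : Prop :=
  ltB M B e f ∨
    (parB M B e f ∧ ∃ p ∈ M.loc '' (upB M B e \ upB M B f),
      ∀ q ∈ M.loc '' (upB M B f \ upB M B e), p < q)

section LoopRewriting

open Relation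

variable {P Lab : Type}

private lemma procLt_mem (M : MSC P Lab) {e f : ℕ} (h : M.procLt e f) :
    e ∈ M.E ∧ f ∈ M.E := by
  induction h with
  | single h => exact M.proc_mem _ _ h
  | tail _ h ih => exact ⟨ih.1, (M.proc_mem _ _ h).2⟩

private lemma procLt_loc (M : MSC P Lab) {e f : ℕ} (h : M.procLt e f) :
    M.loc e = M.loc f := by
  induction h with
  | single h => exact M.proc_loc _ _ h
  | tail _ h ih => exact ih.trans (M.proc_loc _ _ h)

private lemma procLe_loc (M : MSC P Lab) {e f : ℕ} (h : M.procLe e f) :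
    M.loc e = M.loc f := by
  rcases (Relation.reflTransGen_iff_eq_or_transGen).mp h with rfl | h
  · rfl
  · exact procLt_loc M h

private lemma procLt_irrefl (M : MSC P Lab) (e : ℕ) : ¬ M.procLt e e :=
  fun h => M.acyclic e (by
    have key : ∀ a b, TransGen M.proc a b →
        TransGen (fun a b => M.proc a b ∨ M.msg a b) a b := fun a b hab => by
      induction hab with
      | single hp => exact TransGen.single (Or.inl hp)
      | tail _ hp ih => exact ih.tail (Or.inl hp)
    exact key e e h)

private lemma procLt_of_le_ne (M : MSC P Lab) {e f : ℕ} (h : M.procLe e f)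
    (hne : e ≠ f) : M.procLt e f := by
  rcases (Relation.reflTransGen_iff_eq_or_transGen).mp h with rfl | h
  · exact absurd rfl hne
  · exact h

private lemma procLe_antisymm (M : MSC P Lab) {e f : ℕ} (h : M.procLe e f)
    (h' : M.procLe f e) : e = f := by
  by_contra hne
  exact procLt_irrefl M e ((procLt_of_le_ne M h hne).trans_left h')

private lemma procLe_total (M : MSC P Lab) {e f : ℕ} (he : e ∈ M.E) (hf : f ∈ M.E)
    (hl : M.loc e = M.loc f) : M.procLe e f ∨ M.procLe f e := by
  rcases M.proc_total e f he hf hl with rfl | h | h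
  · exact Or.inl ReflTransGen.refl
  · exact Or.inl h.to_reflTransGen
  · exact Or.inr h.to_reflTransGen

mutual
private theorem satMem {P Lab : Type} (M : MSC P Lab) :
    ∀ (φ : EF P Lab) (e : ℕ), EF.sat M φ e → e ∈ M.E
  | .proc _, _, h => h.1
  | .lab _, _, h => h.1
  | .or φ ψ, e, h => h.elim (satMem M φ e) (satMem M ψ e)
  | .not _, _, h => h.1
  | .dia π _, e, h => by
      obtain ⟨f, hs, _⟩ := h
      exact (semMem M π e f hs).1
  | .loop π, e, h => (semMem M π e e h).1
private theorem semMem {P Lab : Type} (M : MSC P Lab) :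
    ∀ (π : PF P Lab) (e f : ℕ), PF.sem M π e f → e ∈ M.E ∧ f ∈ M.E
  | .next, e, f, h => M.proc_mem e f h
  | .prev, e, f, h => ⟨(M.proc_mem f e h).2, (M.proc_mem f e h).1⟩
  | .msg _ _, e, f, h => M.msg_mem e f h.1
  | .msgInv _ _, e, f, h => ⟨(M.msg_mem f e h.1).2, (M.msg_mem f e h.1).1⟩
  | .nextG _, _, _, h => procLt_mem M h.1
  | .prevG _, _, _, h => ⟨(procLt_mem M h.1).2, (procLt_mem M h.1).1⟩
  | .jump _ _, _, _, h => ⟨h.1, h.2.1⟩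
  | .test φ, e, _, h => ⟨satMem M φ e h.2, h.1 ▸ satMem M φ e h.2⟩
  | .comp π₁ π₂, e, f, h => by
      obtain ⟨g, h1, h2⟩ := h
      exact ⟨(semMem M π₁ e g h1).1, (semMem M π₂ g f h2).2⟩
  | .union π₁ π₂, e, f, h => h.elim (semMem M π₁ e f) (semMem M π₂ e f)
  | .inter π₁ π₂, e, f, h => semMem M π₁ e f h.1
  | .compl _, _, _, h => ⟨h.1, h.2.1⟩
end

/-- For a `Loop`-fragment path formula, the process of the target is determined
by the process of the source. -/
private theorem locTgt (M : MSC P Lab) :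
    ∀ (π : PF P Lab), PF.inFrag {PDLOp.loop} π →
    ∀ e e' f f', PF.sem M π e f → PF.sem M π e' f' → M.loc e = M.loc e' →
      M.loc f = M.loc f'
  | .next, _, e, e', f, f', h, h', hl =>
      (M.proc_loc e f h).symm.trans (hl.trans (M.proc_loc e' f' h'))
  | .prev, _, e, e', f, f', h, h', hl =>
      (M.proc_loc f e h).trans (hl.trans (M.proc_loc f' e' h').symm)
  | .msg _ _, _, _, _, _, _, h, h', _ => h.2.2.trans h'.2.2.symm
  | .msgInv _ _, _, _, _, _, _, h, h', _ => h.2.1.trans h'.2.1.symm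
  | .nextG _, _, _, _, _, _, h, h', hl =>
      (procLt_loc M h.1).symm.trans (hl.trans (procLt_loc M h'.1))
  | .prevG _, _, _, _, _, _, h, h', hl =>
      (procLt_loc M h.1).trans (hl.trans (procLt_loc M h'.1).symm)
  | .jump _ _, _, _, _, _, _, h, h', _ => h.2.2.2.trans h'.2.2.2.symm
  | .test _, _, _, _, _, _, h, h', hl => h.1 ▸ h'.1 ▸ hl
  | .comp π₁ π₂, hfr, e, e', f, f', h, h', hl => by
      simp only [PF.inFrag] at hfr
      obtain ⟨g, h1, h2⟩ := h
      obtain ⟨g', h1', h2'⟩ := h'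
      exact locTgt M π₂ hfr.2 g g' f f' h2 h2'
        (locTgt M π₁ hfr.1 e e' g g' h1 h1' hl)
  | .union _ _, hfr, _, _, _, _, _, _, _ => by
      simp only [PF.inFrag] at hfr; simp at hfr
  | .inter _ _, hfr, _, _, _, _, _, _, _ => by
      simp only [PF.inFrag] at hfr; simp at hfr
  | .compl _, hfr, _, _, _, _, _, _, _ => by
      simp only [PF.inFrag] at hfr; simp at hfr

/-- For a `Loop`-fragment path formula, the process of the source is determined
by the process of the target. -/
private theorem locSrc (M : MSC P Lab) :
    ∀ (π : PF P Lab), PF.inFrag {PDLOp.loop} π →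
    ∀ e e' f f', PF.sem M π e f → PF.sem M π e' f' → M.loc f = M.loc f' →
      M.loc e = M.loc e'
  | .next, _, e, e', f, f', h, h', hl =>
      (M.proc_loc e f h).trans (hl.trans (M.proc_loc e' f' h').symm)
  | .prev, _, e, e', f, f', h, h', hl =>
      (M.proc_loc f e h).symm.trans (hl.trans (M.proc_loc f' e' h'))
  | .msg _ _, _, _, _, _, _, h, h', _ => h.2.1.trans h'.2.1.symm
  | .msgInv _ _, _, _, _, _, _, h, h', _ => h.2.2.trans h'.2.2.symm
  | .nextG _, _, _, _, _, _, h, h', hl =>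
      (procLt_loc M h.1).trans (hl.trans (procLt_loc M h'.1).symm)
  | .prevG _, _, _, _, _, _, h, h', hl =>
      (procLt_loc M h.1).symm.trans (hl.trans (procLt_loc M h'.1))
  | .jump _ _, _, _, _, _, _, h, h', _ => h.2.2.1.trans h'.2.2.1.symm
  | .test _, _, _, _, _, _, h, h', hl => h.1 ▸ h'.1 ▸ hl
  | .comp π₁ π₂, hfr, e, e', f, f', h, h', hl => by
      simp only [PF.inFrag] at hfr
      obtain ⟨g, h1, h2⟩ := h
      obtain ⟨g', h1', h2'⟩ := h'
      exact locSrc M π₁ hfr.1 e e' g g' h1 h1'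
        (locSrc M π₂ hfr.2 g g' f f' h2 h2' hl)
  | .union _ _, hfr, _, _, _, _, _, _, _ => by
      simp only [PF.inFrag] at hfr; simp at hfr
  | .inter _ _, hfr, _, _, _, _, _, _, _ => by
      simp only [PF.inFrag] at hfr; simp at hfr
  | .compl _, hfr, _, _, _, _, _, _, _ => by
      simp only [PF.inFrag] at hfr; simp at hfr

/-- The key "uncrossing" property of `Loop`-fragment path formulas. -/
private theorem zswap (M : MSC P Lab) :
    ∀ (π : PF P Lab), PF.inFrag {PDLOp.loop} π →
    ∀ e e' f f', PF.sem M π e f → PF.sem M π e' f' →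
      M.procLe e e' → M.procLe f' f →
      PF.sem M π e f' ∧ PF.sem M π e' f
  | .next, _, e, e', f, f', h, h', he, hf => by
      have hp : M.proc e f := h
      have hp' : M.proc e' f' := h'
      have hee : e = e' := by
        by_contra hne
        exact M.proc_cover e f hp
          ⟨e', procLt_of_le_ne M he hne, (TransGen.single hp').trans_left hf⟩
      subst hee
      have hff : f' = f := by
        by_contra hne
        exact M.proc_cover e f hp
          ⟨f', TransGen.single hp', procLt_of_le_ne M hf hne⟩
      subst hff
      exact ⟨h, h⟩
  | .prev, _, e, e', f, f', h, h', he, hf => by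
      have hp : M.proc f e := h
      have hp' : M.proc f' e' := h'
      have hff : f' = f := by
        by_contra hne
        exact M.proc_cover f' e' hp'
          ⟨f, procLt_of_le_ne M hf hne, (TransGen.single hp).trans_left he⟩
      subst hff
      have hee : e = e' := by
        by_contra hne
        exact M.proc_cover f' e' hp'
          ⟨e, TransGen.single hp, procLt_of_le_ne M he hne⟩
      subst hee
      exact ⟨h, h⟩
  | .msg p q, _, e, e', f, f', h, h', he, hf => by
      have hfifo := M.fifo e f e' f' h.1 h'.1
        (h.2.1.trans h'.2.1.symm) (h.2.2.trans h'.2.2.symm)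
      have hff : f = f' := procLe_antisymm M (hfifo.mp he) hf
      obtain ⟨hee, hff'⟩ := M.msg_once e f e' f' h.1 h'.1 (Or.inr (Or.inr (Or.inr hff)))
      subst hee; subst hff'
      exact ⟨h, h⟩
  | .msgInv p q, _, e, e', f, f', h, h', he, hf => by
      -- h : M.msg f e ∧ ..., h' : M.msg f' e'
      have hfifo := M.fifo f' e' f e h'.1 h.1
        (h'.2.1.trans h.2.1.symm) (h'.2.2.trans h.2.2.symm)
      have hee : e = e' := procLe_antisymm M he (hfifo.mp hf)
      obtain ⟨hff, hee'⟩ := M.msg_once f e f' e' h.1 h'.1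
        (Or.inr (Or.inr (Or.inr hee)))
      subst hff; subst hee'
      exact ⟨h, h⟩
  | .nextG φ, _, e, e', f, f', h, h', he, hf => by
      refine ⟨⟨TransGen.trans_right he h'.1, fun g hg1 hg2 => ?_⟩,
              ⟨TransGen.trans_left h'.1 hf, fun g hg1 hg2 => ?_⟩⟩
      · exact h.2 g hg1 (TransGen.trans_left hg2 hf)
      · exact h.2 g (TransGen.trans_right he hg1) hg2
  | .prevG φ, _, e, e', f, f', h, h', he, hf => by
      -- h : M.procLt f e ∧ ..., h' : M.procLt f' e' ∧ ...
      refine ⟨⟨TransGen.trans_right hf h.1, fun g hg1 hg2 => ?_⟩,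
              ⟨TransGen.trans_left h.1 he, fun g hg1 hg2 => ?_⟩⟩
      · exact h'.2 g hg1 (TransGen.trans_left hg2 he)
      · exact h'.2 g (TransGen.trans_right hf hg1) hg2
  | .jump p r, _, e, e', f, f', h, h', he, hf =>
      ⟨⟨h.1, h'.2.1, h.2.2.1, h'.2.2.2⟩, ⟨h'.1, h.2.1, h'.2.2.1, h.2.2.2⟩⟩
  | .test φ, _, e, e', f, f', h, h', he, hf => by
      obtain ⟨rfl, hs⟩ := h
      obtain ⟨rfl, hs'⟩ := h'
      have : e = e' := procLe_antisymm M he hf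
      subst this
      exact ⟨⟨rfl, hs⟩, ⟨rfl, hs⟩⟩
  | .comp π₁ π₂, hfr, e, e', f, f', h, h', he, hf => by
      simp only [PF.inFrag] at hfr
      obtain ⟨g, h1, h2⟩ := h
      obtain ⟨g', h1', h2'⟩ := h'
      have hloc : M.loc g = M.loc g' :=
        locSrc M π₂ hfr.2 g g' f f' h2 h2' (procLe_loc M hf).symm
      have hg : g ∈ M.E := (semMem M π₂ g f h2).1
      have hg' : g' ∈ M.E := (semMem M π₂ g' f' h2').1
      rcases procLe_total M hg hg' hloc with hgg | hgg
      · obtain ⟨ha, hb⟩ := zswap M π₂ hfr.2 g g' f f' h2 h2' hgg hf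
        exact ⟨⟨g, h1, ha⟩, ⟨g', h1', hb⟩⟩
      · obtain ⟨ha, hb⟩ := zswap M π₁ hfr.1 e e' g g' h1 h1' he hgg
        exact ⟨⟨g', ha, h2'⟩, ⟨g, hb, h2⟩⟩
  | .union _ _, hfr, _, _, _, _, _, _, _, _ => by
      simp only [PF.inFrag] at hfr; simp at hfr
  | .inter _ _, hfr, _, _, _, _, _, _, _, _ => by
      simp only [PF.inFrag] at hfr; simp at hfr
  | .compl _, hfr, _, _, _, _, _, _, _, _ => by
      simp only [PF.inFrag] at hfr; simp at hfr

private lemma exists_greatest {r : ℕ → ℕ → Prop} (hr : Transitive r) :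
    ∀ (S : Finset ℕ), S.Nonempty → (∀ a ∈ S, ∀ b ∈ S, r a b ∨ r b a) →
    ∃ m ∈ S, ∀ a ∈ S, r a m := by
  classical
  intro S
  induction S using Finset.induction_on with
  | empty => intro hS _; exact absurd hS (by simp)
  | @insert a s ha ih =>
    intro _ htot
    rcases s.eq_empty_or_nonempty with rfl | hs
    · refine ⟨a, by simp, fun b hb => ?_⟩
      simp only [Finset.mem_insert, Finset.notMem_empty, or_false] at hb
      rw [hb]
      rcases htot a (by simp) a (by simp) with h | h <;> exact h
    · obtain ⟨m, hm, hmax⟩ := ih hs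
        (fun x hx y hy => htot x (by simp [hx]) y (by simp [hy]))
      rcases htot a (by simp) m (by simp [hm]) with h | h
      · refine ⟨m, by simp [hm], fun b hb => ?_⟩
        rcases Finset.mem_insert.mp hb with rfl | hb
        · exact h
        · exact hmax b hb
      · refine ⟨a, by simp, fun b hb => ?_⟩
        rcases Finset.mem_insert.mp hb with rfl | hb
        · rcases htot b (by simp) b (by simp) with h' | h' <;> exact h'
        · exact hr (hmax b hb) h

private lemma exists_min_max (M : MSC P Lab) (π : PF P Lab)
    (hfr : PF.inFrag {PDLOp.loop} π) {e f0 : ℕ} (h0 : PF.sem M π e f0) :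
    (∃ n, isMinOf M π e n) ∧ (∃ m, isMaxOf M π e m) := by
  classical
  set S : Finset ℕ := M.E.filter (fun f => PF.sem M π e f) with hSdef
  have hmemS : ∀ f, f ∈ S ↔ PF.sem M π e f := by
    intro f
    simp only [hSdef, Finset.mem_filter, and_iff_right_iff_imp]
    exact fun h => (semMem M π e f h).2
  have hS : S.Nonempty := ⟨f0, (hmemS f0).mpr h0⟩
  have htot : ∀ a ∈ S, ∀ b ∈ S, M.procLe a b ∨ M.procLe b a := by
    intro a ha b hb
    exact procLe_total M ((hmemS a).mp ha |> semMem M π e a).2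
      ((hmemS b).mp hb |> semMem M π e b).2
      (locTgt M π hfr e e a b ((hmemS a).mp ha) ((hmemS b).mp hb) rfl)
  constructor
  · obtain ⟨n, hn, hmin⟩ := exists_greatest
      (r := fun a b => M.procLe b a) (fun _ _ _ h1 h2 => h2.trans h1) S hS
      (fun a ha b hb => (htot a ha b hb).symm)
    exact ⟨n, (hmemS n).mp hn, fun f hf => hmin f ((hmemS f).mpr hf)⟩
  · obtain ⟨m, hm, hmax⟩ := exists_greatest
      (r := M.procLe) (fun _ _ _ h1 h2 => h1.trans h2) S hS htot
    exact ⟨m, (hmemS m).mp hm, fun f hf => hmax f ((hmemS f).mpr hf)⟩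

private lemma sat_or_iff (M : MSC P Lab) (φ ψ : EF P Lab) (x : ℕ) :
    EF.sat M (EF.or φ ψ) x ↔ EF.sat M φ x ∨ EF.sat M ψ x := by simp only [EF.sat]

private lemma sat_loop_iff (M : MSC P Lab) (π : PF P Lab) (x : ℕ) :
    EF.sat M (EF.loop π) x ↔ PF.sem M π x x := by simp only [EF.sat]

private lemma sat_dia_iff (M : MSC P Lab) (π : PF P Lab) (φ : EF P Lab) (x : ℕ) :
    EF.sat M (EF.dia π φ) x ↔ ∃ f, PF.sem M π x f ∧ EF.sat M φ f := by
  simp only [EF.sat]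

private lemma sat_not_iff (M : MSC P Lab) (φ : EF P Lab) (x : ℕ) :
    EF.sat M (EF.not φ) x ↔ x ∈ M.E ∧ ¬ EF.sat M φ x := by simp only [EF.sat]

private lemma sem_comp_iff (M : MSC P Lab) (π₁ π₂ : PF P Lab) (x y : ℕ) :
    PF.sem M (PF.comp π₁ π₂) x y ↔ ∃ g, PF.sem M π₁ x g ∧ PF.sem M π₂ g y := by
  simp only [PF.sem]

private lemma sem_prevG_iff (M : MSC P Lab) (φ : EF P Lab) (x y : ℕ) :
    PF.sem M (PF.prevG φ) x y ↔
      M.procLt y x ∧ ∀ g, M.procLt y g → M.procLt g x → EF.sat M φ g := by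
  simp only [PF.sem]

private lemma sat_and_iff (M : MSC P Lab) (φ ψ : EF P Lab) {x : ℕ} (hx : x ∈ M.E) :
    EF.sat M (EF.and φ ψ) x ↔ (EF.sat M φ x ∧ EF.sat M ψ x) := by
  rw [EF.and, sat_not_iff, sat_or_iff, sat_not_iff, sat_not_iff]
  constructor
  · rintro ⟨-, h⟩
    refine ⟨?_, ?_⟩
    · by_contra hc; exact h (Or.inl ⟨hx, hc⟩)
    · by_contra hc; exact h (Or.inr ⟨hx, hc⟩)
  · rintro ⟨h1, h2⟩
    refine ⟨hx, ?_⟩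
    rintro (⟨-, hc⟩ | ⟨-, hc⟩)
    · exact hc h1
    · exact hc h2

end LoopRewriting

/-- Rewriting of loops: for a `PDLsf[Loop]` path formula `π`,
with `mn`, `mx` defining `{(e, min_π(e))}` resp. `{(e, max_π(e))}`, `pinv`
defining the converse of `π`, and `tt` a tautological event formula (so that
`←⁺ = ←_tt`), the event formulas `Loop(π)` and
`Loop(mx) ∨ (⟨π⁻¹⟩true ∧ Loop(mx·←⁺) ∧ ¬Loop(mn·←⁺))` agree at every event of
every MSC. -/
theorem loop_rewriting {P Lab : Type}
    [Fintype P] [Nonempty P] [Fintype Lab] [Nonempty Lab]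
    (π mn mx pinv : PF P Lab) (tt : EF P Lab)
    (hπ : PF.inFrag {PDLOp.loop} π)
    (hmn : ∀ (M : MSC P Lab) (e f : ℕ), PF.sem M mn e f ↔ isMinOf M π e f)
    (hmx : ∀ (M : MSC P Lab) (e f : ℕ), PF.sem M mx e f ↔ isMaxOf M π e f)
    (hpinv : ∀ (M : MSC P Lab) (e f : ℕ), PF.sem M pinv e f ↔ PF.sem M π f e)
    (htt : ∀ (M : MSC P Lab) (e : ℕ), EF.sat M tt e ↔ e ∈ M.E) :
    ∀ (M : MSC P Lab), ∀ e ∈ M.E,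
      (EF.sat M (EF.loop π) e ↔
        EF.sat M (EF.or (EF.loop mx)
          (EF.and (EF.dia pinv tt)
            (EF.and (EF.loop (PF.comp mx (PF.prevG tt)))
              (EF.not (EF.loop (PF.comp mn (PF.prevG tt))))))) e) := by
  intro M e he
  rw [sat_loop_iff, sat_or_iff, sat_loop_iff, sat_and_iff M _ _ he, sat_and_iff M _ _ he,
    sat_dia_iff, sat_loop_iff, sat_not_iff, sat_loop_iff, sem_comp_iff, sem_comp_iff]
  constructor
  · intro h
    obtain ⟨-, m, hm⟩ := exists_min_max M π hπ h
    have hem : M.procLe e m := hm.2 e h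
    by_cases heq : e = m
    · exact Or.inl ((hmx M e e).mpr (heq ▸ hm))
    · refine Or.inr ⟨⟨e, (hpinv M e e).mpr h, (htt M e).mpr he⟩, ?_, ?_⟩
      · -- Loop(mx · ←⁺)
        refine ⟨m, (hmx M e m).mpr hm, ?_⟩
        rw [sem_prevG_iff]
        exact ⟨procLt_of_le_ne M hem heq,
          fun g hg1 _ => (htt M g).mpr (procLt_mem M hg1).2⟩
      · -- ¬ Loop(mn · ←⁺)
        refine ⟨he, ?_⟩
        rintro ⟨x, hx1, hx2⟩
        rw [sem_prevG_iff] at hx2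
        have hxe : M.procLe x e := (((hmn M e x).mp hx1).2) e h
        exact procLt_irrefl M e (Relation.TransGen.trans_left hx2.1 hxe)
  · rintro (hL | ⟨⟨f0, hf0p, -⟩, hB, hC⟩)
    · exact ((hmx M e e).mp hL).1
    · have hf0 : PF.sem M π f0 e := (hpinv M e f0).mp hf0p
      obtain ⟨m, hmsem, hrest⟩ := hB
      rw [sem_prevG_iff] at hrest
      have hlt : M.procLt e m := hrest.1
      have hm : isMaxOf M π e m := (hmx M e m).mp hmsem
      obtain ⟨⟨n, hn⟩, -⟩ := exists_min_max M π hπ hm.1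
      have hnlt : ¬ M.procLt e n := by
        intro hlt'
        refine hC.2 ⟨n, (hmn M e n).mpr hn, ?_⟩
        rw [sem_prevG_iff]
        exact ⟨hlt', fun g hg1 _ => (htt M g).mpr (procLt_mem M hg1).2⟩
      have hloc_em : M.loc e = M.loc m := procLt_loc M hlt
      have hloc_ne : M.loc n = M.loc e :=
        (locTgt M π hπ e e n m hn.1 hm.1 rfl).trans hloc_em.symm
      have hnE : n ∈ M.E := (semMem M π e n hn.1).2
      have hne : M.procLe n e := by
        rcases M.proc_total n e hnE he hloc_ne with rfl | h' | h'
        · exact Relation.ReflTransGen.refl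
        · exact h'.to_reflTransGen
        · exact absurd h' hnlt
      have hloc_f0 : M.loc f0 = M.loc e :=
        locSrc M π hπ f0 e e m hf0 hm.1 hloc_em
      have hf0E : f0 ∈ M.E := (semMem M π f0 e hf0).1
      rcases procLe_total M hf0E he hloc_f0 with hle | hle
      · exact (zswap M π hπ f0 e e n hf0 hn.1 hle hne).2
      · exact (zswap M π hπ e f0 m e hm.1 hf0 hle hlt.to_reflTransGen).1
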